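/- Every nil clean ideal of a ring R is a clean ideal of R; that is, if every element of an ideal I can be written as e + n with e idempotent and n nilpotent in R, then every element of I can be written as e + u with e idempotent and u a unit of R. -/

import Mathlib

/-- An ideal `I` of a ring `R` is nil clean if every element of `I` is the sum of
an idempotent and a nilpotent element of `R`. -/
def IsNilCleanIdeal {R : Type*} [Ring R] (I : TwoSidedIdeal R) : Prop :=
  ∀ x ∈ I, ∃ e n : R, IsIdempotentElem e ∧ IsNilpotent n ∧ x = e + n

section Aux

variable {R : Type*} [Ring R]

/-- If `e` and `f` are idempotents whose sum is nilpotent, then `2^M * e = 0` for some `M`. -/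
lemma aux_two_pow_mul_eq_zero {e f : R} (he : IsIdempotentElem e)
    (hf : IsIdempotentElem f) (ht : IsNilpotent (e + f)) :
    ∃ M : ℕ, (2 : R) ^ M * e = 0 := by
  have h2c : ∀ r : R, Commute (2 : R) r := fun r => by
    show 2 * r = r * 2
    rw [two_mul, mul_two]
  set t := e + f with htdef
  set c := 2 * t - t ^ 2 with hcdef
  have hc : c = e + f - e * f - f * e := by
    have h2 : t ^ 2 = e + f + e * f + f * e := by
      have h : t ^ 2 = e * e + e * f + (f * e + f * f) := by rw [htdef]; noncomm_ring
      rw [h, he.eq, hf.eq]; abel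
    rw [hcdef, h2, htdef]; noncomm_ring
  have hee : ∀ r : R, e * (e * r) = e * r := fun r => by rw [← mul_assoc, he.eq]
  have hce : Commute c e := by
    show c * e = e * c
    rw [hc]
    simp only [sub_mul, add_mul, mul_sub, mul_add, mul_assoc, he.eq, hee]
    abel
  have hct : Commute c t := by
    show c * t = t * c
    rw [hcdef]; noncomm_ring
  have hcee : c * e = e - e * (f * e) := by
    rw [hc]
    simp only [sub_mul, add_mul, mul_assoc, he.eq]
    abel
  have ht2 : t ^ 2 = 2 * t - c := by rw [hcdef]; abel
  have hrec : ∀ k : ℕ, e * t ^ (k + 2) * e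
      = 2 * (e * t ^ (k + 1) * e) - c * (e * t ^ k * e) := by
    intro k
    have h2 : t ^ (k + 2) = 2 * t ^ (k + 1) - c * t ^ k := by
      calc t ^ (k + 2) = t ^ k * t ^ 2 := by rw [← pow_add]
        _ = t ^ k * (2 * t - c) := by rw [ht2]
        _ = 2 * t ^ (k + 1) - c * t ^ k := by
            rw [mul_sub, ← mul_assoc, ← (h2c (t ^ k)).eq, mul_assoc, ← pow_succ,
              (hct.pow_right k).eq]
    rw [h2, mul_sub, sub_mul]
    congr 1
    · noncomm_ring
    · rw [← mul_assoc, ← hce.eq]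
      simp only [mul_assoc]
  have main : ∀ k : ℕ,
      (∃ b, Commute c b ∧ e * t ^ k * e = 2 ^ k * e - c * b) ∧
      (∃ b, Commute c b ∧ e * t ^ (k + 1) * e = 2 ^ (k + 1) * e - c * b) := by
    intro k
    induction k with
    | zero =>
      constructor
      · exact ⟨0, Commute.zero_right c, by simp [he.eq]⟩
      · refine ⟨e, hce, ?_⟩
        rw [pow_one, htdef, pow_one, hcee]
        simp only [mul_add, add_mul, mul_assoc, he.eq]
        rw [two_mul]
        abel
    | succ k ih =>
      refine ⟨ih.2, ?_⟩
      obtain ⟨b, hcb, hb⟩ := ih.1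
      obtain ⟨b', hcb', hb'⟩ := ih.2
      refine ⟨2 * b' + 2 ^ k * e - c * b, ?_, ?_⟩
      · exact (((h2c c).symm.mul_right hcb').add_right
          (((h2c c).symm.pow_right k).mul_right hce)).sub_right
          ((Commute.refl c).mul_right hcb)
      · rw [hrec k, hb, hb', show (2:R) ^ (k + 1 + 1) = 2 * 2 ^ (k + 1) from pow_succ' 2 (k+1),
          show (2:R) ^ (k + 1) = 2 * 2 ^ k from pow_succ' 2 k]
        noncomm_ring
  obtain ⟨N, hN⟩ := ht
  obtain ⟨b, hcb, hb⟩ := (main N).1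
  have h2N : (2 : R) ^ N * e = c * b := by
    rw [show t ^ N = 0 from hN, mul_zero, zero_mul] at hb
    exact sub_eq_zero.mp hb.symm
  have hcnil : IsNilpotent c := by
    have hcform : c = (2 - t) * t := by rw [hcdef]; noncomm_ring
    rw [hcform]
    exact Commute.isNilpotent_mul_left ((h2c t).sub_left (Commute.refl t)) ⟨N, hN⟩
  obtain ⟨J, hJ⟩ := hcnil
  refine ⟨N * (J + 1), ?_⟩
  have hz : ((2 : R) ^ N * e) ^ (J + 1) = 0 := by
    rw [h2N, hcb.mul_pow (J + 1), pow_succ, hJ, zero_mul, zero_mul]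
  calc (2 : R) ^ (N * (J + 1)) * e = ((2 : R) ^ N) ^ (J + 1) * e ^ (J + 1) := by
        rw [← pow_mul, he.pow_succ_eq J]
    _ = ((2 : R) ^ N * e) ^ (J + 1) := (((h2c e).pow_left N).mul_pow (J + 1)).symm
    _ = 0 := hz

end Aux

/-- Every nil clean ideal is a clean ideal. -/
theorem nilCleanIdeal_isCleanIdeal {R : Type*} [Ring R] (I : TwoSidedIdeal R)
    (h : IsNilCleanIdeal I) :
    ∀ x ∈ I, ∃ e u : R, IsIdempotentElem e ∧ IsUnit u ∧ x = e + u := by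
  intro x hx
  obtain ⟨e, n, he, hn, rfl⟩ := h x hx
  -- Step 1 : `e ∈ I`.
  have hkey : ∀ j : ℕ, e - (-n) ^ j * e ∈ I := by
    intro j
    induction j with
    | zero => simp
    | succ j ih =>
      have h1 : (e + n) * e = e + n * e := by rw [add_mul, he.eq]
      have heq : e - (-n) ^ (j + 1) * e = (e - (-n) ^ j * e) + (-n) ^ j * ((e + n) * e) := by
        rw [pow_succ, h1]
        noncomm_ring
      rw [heq]
      exact I.add_mem ih (I.mul_mem_left _ _ (I.mul_mem_right _ _ hx))
  obtain ⟨k, hk⟩ := hn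
  have hek : (-n : R) ^ k = 0 := by
    rw [neg_pow, hk, mul_zero]
  have heI : e ∈ I := by
    have := hkey k
    rwa [hek, zero_mul, sub_zero] at this
  -- Step 2 : apply nil-cleanness to `-e` to get an idempotent `f` with `e + f` nilpotent.
  obtain ⟨f, m, hf, hm, hfm⟩ := h (-e) (I.neg_mem heI)
  have hefm : e + f = -m := by
    have hf2 : f = -e - m := by rw [hfm]; abel
    rw [hf2]; abel
  have htnil : IsNilpotent (e + f) := by rw [hefm]; exact hm.neg
  obtain ⟨M, hM⟩ := aux_two_pow_mul_eq_zero he hf htnil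
  have hM1 : (2 : R) ^ (M + 1) * e = 0 := by
    rw [pow_succ', mul_assoc, hM, mul_zero]
  -- Step 3 : build the unit `(n - 1) + 2 * e`.
  have h2c : ∀ r : R, Commute (2 : R) r := fun r => by
    show 2 * r = r * 2
    rw [two_mul, mul_two]
  obtain ⟨W, hW⟩ := IsNilpotent.isUnit_sub_one ⟨k, hk⟩
  have hcent : ∀ r : R, (2 : R) ^ (M + 1) * r = r * (2 : R) ^ (M + 1) :=
    fun r => ((h2c r).pow_left (M + 1)).eq
  have hz : ((2 : R) * ((↑W⁻¹ : R) * e)) ^ (M + 1) = 0 := by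
    rw [(h2c _).mul_pow, pow_succ ((↑W⁻¹ : R) * e) M]
    rw [show (2:R) ^ (M+1) * (((↑W⁻¹ : R) * e) ^ M * ((↑W⁻¹ : R) * e))
        = ((↑W⁻¹ : R) * e) ^ M * ((↑W⁻¹ : R) * ((2:R) ^ (M+1) * e)) by
      rw [hcent]
      simp only [mul_assoc]
      rw [← hcent e]]
    rw [hM1, mul_zero, mul_zero]
  have hzu : IsUnit (1 + 2 * ((↑W⁻¹ : R) * e)) := IsNilpotent.isUnit_one_add ⟨M + 1, hz⟩
  have hWu : (↑W : R) * (1 + 2 * ((↑W⁻¹ : R) * e)) = (n - 1) + 2 * e := by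
    calc (↑W : R) * (1 + 2 * ((↑W⁻¹ : R) * e))
        = ↑W + ↑W * 2 * ((↑W⁻¹ : R) * e) := by rw [mul_add, mul_one, mul_assoc]
      _ = ↑W + 2 * (↑W * (↑W⁻¹ : R)) * e := by
          rw [← (h2c (↑W : R)).eq]
          simp only [mul_assoc]
      _ = (n - 1) + 2 * e := by rw [Units.mul_inv, mul_one, hW]
  have hu : IsUnit ((n - 1) + 2 * e) := by
    rw [← hWu]
    exact W.isUnit.mul hzu
  refine ⟨1 - e, (n - 1) + 2 * e, he.one_sub, hu, ?_⟩
  noncomm_ring
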